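/- The Lobachevsky function satisfies the reflection identity Λ(π - θ) = -Λ(θ) for every real θ. -/

import Mathlib

open MeasureTheory Real

/-- The Lobachevsky function `Λ(θ) = -∫₀^θ log |2 sin t| dt`. -/
noncomputable def lobachevsky (θ : ℝ) : ℝ :=
  -∫ t in (0:ℝ)..θ, Real.log |2 * Real.sin t|

namespace LobAux

noncomputable def f (t : ℝ) : ℝ := Real.log |2 * Real.sin t|

lemma f_per : Function.Periodic f π := fun x => by
  simp [f, Real.sin_add_pi, abs_neg, mul_neg]

lemma f_refl (x : ℝ) : f (π - x) = f x := by
  simp [f, Real.sin_pi_sub]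

lemma f_meas : Measurable f :=
  Real.measurable_log.comp ((measurable_sin.const_mul 2).abs)

lemma abs_log_le {t : ℝ} (ht : 0 < t) (ht' : t ≤ π / 2) :
    |f t| ≤ |Real.log 2| + |Real.log (4 / π)| + (2 * t ^ (-(1/2) : ℝ) + t) := by
  have hs : 0 < Real.sin t := Real.sin_pos_of_pos_of_lt_pi ht (lt_of_le_of_lt ht' (by linarith [Real.pi_pos]))
  have habs : |2 * Real.sin t| = 2 * Real.sin t := abs_of_pos (by linarith)
  have hup : f t ≤ Real.log 2 := by
    rw [f, habs]
    have h2s : 2 * Real.sin t ≤ 2 := by nlinarith [Real.sin_le_one t]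
    exact Real.log_le_log (by linarith) h2s
  have hlow : Real.log (4 / π) + Real.log t ≤ f t := by
    rw [f, habs]
    have hpi : (0:ℝ) < π := Real.pi_pos
    have hml : 2 / π * t ≤ Real.sin t := Real.mul_le_sin ht.le ht'
    have h4 : (0:ℝ) < 4 / π * t := by positivity
    have hkey : 4 / π * t ≤ 2 * Real.sin t := by
      have he : 4 / π * t = 2 * (2 / π * t) := by ring
      rw [he]; linarith
    have hm : Real.log (4 / π) + Real.log t = Real.log (4 / π * t) :=
      (Real.log_mul (by positivity) (ne_of_gt ht)).symm
    rw [hm]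
    exact Real.log_le_log h4 hkey
  have hlogt : |Real.log t| ≤ 2 * t ^ (-(1/2) : ℝ) + t := by
    rcases le_or_gt t 1 with h1 | h1
    · have hle : Real.log t ≤ 0 := Real.log_nonpos ht.le h1
      have hr : (0:ℝ) < t ^ (-(1/2) : ℝ) := Real.rpow_pos_of_pos ht _
      have : Real.log (t ^ (-(1/2) : ℝ)) ≤ t ^ (-(1/2) : ℝ) - 1 :=
        Real.log_le_sub_one_of_pos hr
      rw [Real.log_rpow ht] at this
      rw [abs_of_nonpos hle]
      nlinarith
    · have hle : 0 ≤ Real.log t := Real.log_nonneg h1.le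
      have : Real.log t ≤ t - 1 := Real.log_le_sub_one_of_pos ht
      have hr : (0:ℝ) ≤ t ^ (-(1/2) : ℝ) := (Real.rpow_pos_of_pos ht _).le
      rw [abs_of_nonneg hle]
      nlinarith
  have h1 : f t ≤ |Real.log 2| + |Real.log (4 / π)| + (2 * t ^ (-(1/2) : ℝ) + t) := by
    have := le_abs_self (Real.log 2)
    have h2 := abs_nonneg (Real.log (4 / π))
    have h3 : (0:ℝ) ≤ 2 * t ^ (-(1/2) : ℝ) + t := by
      have := (Real.rpow_pos_of_pos ht (-(1/2) : ℝ)).le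
      linarith
    linarith
  have h2 : -( |Real.log 2| + |Real.log (4 / π)| + (2 * t ^ (-(1/2) : ℝ) + t)) ≤ f t := by
    have ha := neg_abs_le (Real.log (4 / π))
    have hb := neg_abs_le (Real.log t)
    have hc := abs_nonneg (Real.log 2)
    have hd := abs_le.mp hlogt
    linarith [hlow]
  exact abs_le.mpr ⟨h2, h1⟩

lemma int_half : IntervalIntegrable f volume 0 (π / 2) := by
  have hpi : (0:ℝ) < π := Real.pi_pos
  have hG : IntervalIntegrable
      (fun t : ℝ => |Real.log 2| + |Real.log (4 / π)| + (2 * t ^ (-(1/2) : ℝ) + t))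
      volume 0 (π / 2) := by
    apply IntervalIntegrable.add
    · exact intervalIntegrable_const
    · exact ((intervalIntegral.intervalIntegrable_rpow' (by norm_num)).const_mul 2).add
        (continuous_id.intervalIntegrable _ _)
  apply hG.mono_fun' (f_meas.aestronglyMeasurable)
  rw [Set.uIoc_of_le (by positivity : (0:ℝ) ≤ π / 2)]
  filter_upwards [ae_restrict_mem measurableSet_Ioc] with t ht
  have := abs_log_le ht.1 ht.2
  simpa using this

lemma int_half' : IntervalIntegrable f volume (π / 2) π := by
  have h := (int_half.comp_sub_left π)
  have heq : (fun x : ℝ => f (π - x)) = f := funext f_refl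
  rw [heq] at h
  have : π - 0 = π := by ring
  rw [this] at h
  have : π - π / 2 = π / 2 := by ring
  rw [this] at h
  exact h.symm

lemma int_0pi : IntervalIntegrable f volume 0 π := int_half.trans int_half'

lemma int_nat : ∀ n : ℕ, IntervalIntegrable f volume 0 ((n : ℝ) * π) := by
  intro n
  induction n with
  | zero => simp
  | succ n ih =>
      have hp : IntervalIntegrable f volume ((n:ℝ) * π) ((n:ℝ) * π + π) := by
        have h := int_0pi.comp_sub_right ((n:ℝ) * π)
        have heq : (fun x : ℝ => f (x - (n:ℝ) * π)) = f :=
          funext fun x => (f_per.nat_mul n).sub_eq x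
        rw [heq] at h
        simpa [add_comm] using h
      have := ih.trans hp
      have he : ((n:ℝ) + 1) * π = (n:ℝ) * π + π := by ring
      rw [Nat.cast_succ, he]
      exact this

lemma int_symm_nat : ∀ n : ℕ, IntervalIntegrable f volume (-((n:ℝ) * π)) ((n:ℝ) * π) := by
  intro n
  have hneg : IntervalIntegrable f volume (-((n:ℝ) * π)) 0 := by
    have h := (int_nat n).comp_add_right ((n:ℝ) * π)
    have heq : (fun x : ℝ => f (x + (n:ℝ) * π)) = f :=
      funext fun x => (f_per.nat_mul n) x
    rw [heq] at h
    simpa using h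
  exact hneg.trans (int_nat n)

lemma int_all (a b : ℝ) : IntervalIntegrable f volume a b := by
  obtain ⟨n, hn⟩ := exists_nat_gt ((|a| ⊔ |b|) / π)
  have hpi : (0:ℝ) < π := Real.pi_pos
  have hbound : |a| ⊔ |b| ≤ (n:ℝ) * π := by
    rw [div_lt_iff₀ hpi] at hn
    linarith
  apply (int_symm_nat n).mono_set
  have hsub : Set.uIcc a b ⊆ Set.Icc (-((n:ℝ) * π)) ((n:ℝ) * π) := by
    apply Set.uIcc_subset_Icc
    constructor
    · have : |a| ≤ (n:ℝ) * π := le_trans (le_max_left _ _) hbound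
      have := abs_le.mp this; exact this.1
    · exact le_trans (le_trans (le_abs_self a) (le_max_left _ _)) hbound
    constructor
    · have : |b| ≤ (n:ℝ) * π := le_trans (le_max_right _ _) hbound
      have := abs_le.mp this; exact this.1
    · exact le_trans (le_trans (le_abs_self b) (le_max_right _ _)) hbound
  have : Set.uIcc (-((n:ℝ) * π)) ((n:ℝ) * π) = Set.Icc (-((n:ℝ) * π)) ((n:ℝ) * π) := by
    apply Set.uIcc_of_le
    have : (0:ℝ) ≤ (n:ℝ) * π := by positivity
    linarith
  rw [this]
  exact hsub

lemma refl_integral (a b : ℝ) :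
    ∫ x in a..b, f (π - x) = ∫ x in (π - b)..(π - a), f x :=
  intervalIntegral.integral_comp_sub_left f π

lemma half_eq : ∫ x in (π/2)..π, f x = ∫ x in (0:ℝ)..(π/2), f x := by
  have h1 : ∫ x in (0:ℝ)..(π/2), f (π - x) = ∫ x in (π - π/2)..(π - 0), f x :=
    refl_integral 0 (π/2)
  have h2 : ∫ x in (0:ℝ)..(π/2), f (π - x) = ∫ x in (0:ℝ)..(π/2), f x := by
    apply intervalIntegral.integral_congr
    intro x _
    exact f_refl x
  rw [h2] at h1
  rw [show π - π/2 = π/2 by ring, show π - 0 = π by ring] at h1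
  exact h1.symm

lemma cos_integral : ∫ x in (0:ℝ)..(π/2), f (π/2 - x) = ∫ x in (0:ℝ)..(π/2), f x := by
  have h1 : ∫ x in (0:ℝ)..(π/2), f (π/2 - x) = ∫ x in (π/2 - π/2)..(π/2 - 0), f x :=
    intervalIntegral.integral_comp_sub_left f (π/2)
  rw [h1, show π/2 - π/2 = (0:ℝ) by ring, show π/2 - 0 = π/2 by ring]

lemma int_cos : IntervalIntegrable (fun x => f (π/2 - x)) volume 0 (π/2) := by
  have h := int_half.comp_sub_left (π/2)
  rw [show π/2 - 0 = π/2 by ring, show π/2 - π/2 = (0:ℝ) by ring] at h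
  exact h.symm

lemma integral_zero_pi : ∫ x in (0:ℝ)..π, f x = 0 := by
  set J := ∫ x in (0:ℝ)..(π/2), f x with hJ
  have hpi : (0:ℝ) < π := Real.pi_pos
  have hI2 : ∫ x in (0:ℝ)..π, f x = 2 * J := by
    rw [← intervalIntegral.integral_add_adjacent_intervals int_half int_half', half_eq]
    ring
  -- doubling
  have hK : ∫ x in (0:ℝ)..(π/2), f (2 * x) = 2⁻¹ * ∫ x in (0:ℝ)..π, f x := by
    have h := intervalIntegral.integral_comp_mul_left f (c := 2) (a := 0) (b := π/2) two_ne_zero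
    rw [show (2:ℝ) * 0 = 0 by ring, show (2:ℝ) * (π/2) = π by ring] at h
    simpa using h
  have hsplit : ∫ x in (0:ℝ)..(π/2), f (2 * x)
      = (∫ x in (0:ℝ)..(π/2), f x) + ∫ x in (0:ℝ)..(π/2), f (π/2 - x) := by
    have hcongr : ∫ x in (0:ℝ)..(π/2), f (2 * x)
        = ∫ x in (0:ℝ)..(π/2), (f x + f (π/2 - x)) := by
      apply intervalIntegral.integral_congr_ae
      have hnull : ∀ᵐ x : ℝ, x ∉ ({π/2} : Set ℝ) := by
        rw [← MeasureTheory.measure_eq_zero_iff_ae_notMem]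
        exact Real.volume_singleton
      filter_upwards [hnull] with x hx hmem
      rw [Set.uIoc_of_le (by positivity : (0:ℝ) ≤ π/2)] at hmem
      have hx1 : 0 < x := hmem.1
      have hx2 : x < π/2 := lt_of_le_of_ne hmem.2 (by simpa using hx)
      have hs : 0 < Real.sin x := Real.sin_pos_of_pos_of_lt_pi hx1 (by linarith)
      have hc : 0 < Real.cos x := Real.cos_pos_of_mem_Ioo ⟨by linarith, hx2⟩
      have hsin2 : 2 * Real.sin (2 * x) = (2 * Real.sin x) * (2 * Real.cos x) := by
        rw [Real.sin_two_mul]; ring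
      have h1 : f (2 * x) = Real.log (|2 * Real.sin x| * |2 * Real.cos x|) := by
        rw [f, hsin2, abs_mul]
      rw [h1, Real.log_mul (by positivity) (by positivity)]
      congr 1
      rw [f, Real.sin_pi_div_two_sub]
    rw [hcongr]
    exact intervalIntegral.integral_add int_half int_cos
  rw [cos_integral, ← hJ] at hsplit
  rw [hI2] at hK
  rw [hsplit] at hK
  -- hK : J + J = 2⁻¹ * (2 * J)?? that's J = J, something off
  linarith [hK, hI2]

end LobAux

/-- The reflection identity Λ(π - θ) = -Λ(θ). -/
theorem lobachevsky_pi_sub (θ : ℝ) : lobachevsky (Real.pi - θ) = -lobachevsky θ := by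
  have key : ∫ t in (0:ℝ)..(π - θ), LobAux.f t = - ∫ t in (0:ℝ)..θ, LobAux.f t := by
    have h1 : ∫ x in (0:ℝ)..(π - θ), LobAux.f (π - x)
        = ∫ x in (π - (π - θ))..(π - 0), LobAux.f x :=
      intervalIntegral.integral_comp_sub_left _ π
    have h2 : ∫ x in (0:ℝ)..(π - θ), LobAux.f (π - x) = ∫ x in (0:ℝ)..(π - θ), LobAux.f x := by
      apply intervalIntegral.integral_congr
      intro x _; exact LobAux.f_refl x
    rw [h2, show π - (π - θ) = θ by ring, show π - 0 = π by ring] at h1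
    have hadd : (∫ x in (0:ℝ)..θ, LobAux.f x) + ∫ x in θ..π, LobAux.f x
        = ∫ x in (0:ℝ)..π, LobAux.f x :=
      intervalIntegral.integral_add_adjacent_intervals (LobAux.int_all 0 θ) (LobAux.int_all θ π)
    rw [LobAux.integral_zero_pi] at hadd
    rw [h1]
    linarith
  unfold lobachevsky
  have hf : (fun t => Real.log |2 * Real.sin t|) = LobAux.f := rfl
  rw [hf, key]
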